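/- Fix γ > 0 and p ≥ 1. The integral ∫₀^δ ∫₀^δ (a^{(γ−1)(p−1)} (t+a)^{p−1})^{-1} dt da is finite if and only if p < min{γ/(γ−1), (γ+2)/γ} (with γ/(γ−1) interpreted as +∞ when γ ≤ 1). -/

import Mathlib

open Real Set MeasureTheory

lemma inner_int {a δ : ℝ} (β : ℝ) (ha : 0 < a) :
    IntegrableOn (fun t => (t + a) ^ (-β)) (Ioo 0 δ) := by
  rcases le_or_gt δ 0 with h | h
  · rw [Ioo_eq_empty (by simpa using h)]; simp [IntegrableOn]
  refine (ContinuousOn.integrableOn_Icc ?_).mono_set Ioo_subset_Icc_self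
  refine ContinuousOn.rpow_const (by fun_prop) fun t ht => Or.inl ?_
  have := ht.1
  positivity

lemma meas2 (α β : ℝ) :
    StronglyMeasurable (fun q : ℝ × ℝ => q.2 ^ (-α) * (q.1 + q.2) ^ (-β)) := by
  apply Measurable.stronglyMeasurable
  fun_prop

lemma ub {a δ b : ℝ} (ha : 0 < a) (hδ : 0 < δ) (hb : 1 < b) :
    ∫ t in Ioo 0 δ, (t + a) ^ (-b) ≤ a ^ (1 - b) / (b - 1) := by
  have h0 : (0:ℝ) ∉ Set.uIcc a (δ + a) := by
    rw [uIcc_of_le (by linarith)]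
    intro h
    exact absurd h.1 (by linarith)
  have hcalc : ∫ t in Ioo 0 δ, (t + a) ^ (-b)
      = ((δ + a) ^ (-b + 1) - a ^ (-b + 1)) / (-b + 1) := by
    rw [← integral_Ioc_eq_integral_Ioo, ← intervalIntegral.integral_of_le hδ.le,
      intervalIntegral.integral_comp_add_right (fun x => x ^ (-b)) a, zero_add,
      integral_rpow (Or.inr ⟨by intro h; linarith [neg_eq_iff_eq_neg.mp h], h0⟩)]
  have h1 : (0:ℝ) ≤ (δ + a) ^ (-b + 1) := rpow_nonneg (by linarith) _
  have h2 : ((δ + a) ^ (-b + 1) - a ^ (-b + 1)) / (-b + 1)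
      = (a ^ (-b + 1) - (δ + a) ^ (-b + 1)) / (b - 1) := by
    rw [div_eq_div_iff (by linarith) (by linarith)]
    ring
  rw [hcalc, h2, show (1 - b) = -b + 1 by ring]
  gcongr
  · linarith


lemma lb1 {a δ β : ℝ} (hβ : 0 ≤ β) (ha : a ∈ Ioo 0 δ) :
    δ * (2 * δ) ^ (-β) ≤ ∫ t in Ioo 0 δ, (t + a) ^ (-β) := by
  have hδ : 0 < δ := ha.1.trans ha.2
  have : ∫ _ in Ioo (0:ℝ) δ, (2 * δ) ^ (-β) = δ * (2 * δ) ^ (-β) := by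
    rw [setIntegral_const, measureReal_def, Real.volume_Ioo, ENNReal.toReal_ofReal (by linarith), smul_eq_mul,
      sub_zero]
  rw [← this]
  refine setIntegral_mono_on (integrableOn_const (by simp [Real.volume_Ioo])) 
    (inner_int β ha.1) measurableSet_Ioo fun t ht => ?_
  exact rpow_le_rpow_of_nonpos (by linarith [ht.1, ha.1]) (by linarith [ht.2, ha.2.le]) 
    (by linarith)

lemma lb2 {a δ β : ℝ} (hβ : 0 ≤ β) (ha : a ∈ Ioo 0 δ) :
    2 ^ (-β) * a ^ (1 - β) ≤ ∫ t in Ioo 0 δ, (t + a) ^ (-β) := by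
  have ha0 := ha.1
  have step1 : ∫ t in Ioo 0 a, (t + a) ^ (-β) ≤ ∫ t in Ioo 0 δ, (t + a) ^ (-β) := by
    refine setIntegral_mono_set (inner_int β ha.1) ?_ 
      (HasSubset.Subset.eventuallyLE (Ioo_subset_Ioo le_rfl ha.2.le))
    filter_upwards [ae_restrict_mem measurableSet_Ioo] with t ht
    exact rpow_nonneg (by linarith [ht.1]) _
  refine le_trans ?_ step1
  have hconst : ∫ _ in Ioo (0:ℝ) a, (2 * a) ^ (-β) = a * (2 * a) ^ (-β) := by
    rw [setIntegral_const, measureReal_def, Real.volume_Ioo, ENNReal.toReal_ofReal (by linarith), smul_eq_mul,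
      sub_zero]
  have : a * (2 * a) ^ (-β) = 2 ^ (-β) * a ^ (1 - β) := by
    rw [mul_rpow (by norm_num) ha0.le, show (1 - β) = 1 + (-β) by ring, rpow_add ha0, rpow_one]
    ring
  rw [← this, ← hconst]
  refine setIntegral_mono_on (integrableOn_const (by simp [Real.volume_Ioo])) 
    ((inner_int β ha.1).mono_set (Ioo_subset_Ioo le_rfl ha.2.le)) measurableSet_Ioo fun t ht => ?_
  exact rpow_le_rpow_of_nonpos (by linarith [ht.1]) (by linarith [ht.2]) (by linarith)

lemma ub2 {a δ β b : ℝ} (hβ : 0 ≤ β) (hβb : β ≤ b) (hb : 1 < b) (ha : a ∈ Ioo 0 δ)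
    (hδ1 : δ < 1) :
    ∫ t in Ioo 0 δ, (t + a) ^ (-β) ≤ 2 ^ (b - β) * (a ^ (1 - b) / (b - 1)) := by
  have ha0 := ha.1
  have hδ0 : (0:ℝ) < δ := ha.1.trans ha.2
  have step1 : ∫ t in Ioo 0 δ, (t + a) ^ (-β)
      ≤ ∫ t in Ioo 0 δ, 2 ^ (b - β) * (t + a) ^ (-b) := by
    refine setIntegral_mono_on (inner_int β ha.1) ((inner_int b ha.1).const_mul _)
      measurableSet_Ioo fun t ht => ?_
    have ht0 : (0:ℝ) < t + a := by linarith [ht.1]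
    have : (t + a) ^ (-β) = (t + a) ^ (-b) * (t + a) ^ (b - β) := by
      rw [← rpow_add ht0]; ring_nf
    rw [this]
    have h2 : (t + a) ^ (b - β) ≤ 2 ^ (b - β) :=
      rpow_le_rpow ht0.le (by linarith [ht.2, ha.2]) (by linarith)
    nlinarith [rpow_nonneg ht0.le (-b), rpow_nonneg ht0.le (b - β)]
  rw [integral_const_mul] at step1
  exact step1.trans (mul_le_mul_of_nonneg_left (ub ha0 hδ0 hb) (by positivity))

lemma core {α β δ : ℝ} (hβ : 0 ≤ β) (hδ0 : 0 < δ) (hδ1 : δ < 1) :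
    IntegrableOn (fun q : ℝ × ℝ => q.2 ^ (-α) * (q.1 + q.2) ^ (-β))
      (Ioo 0 δ ×ˢ Ioo 0 δ) ↔ (α < 1 ∧ α + β < 2) := by
  set μ := volume.restrict (Ioo (0:ℝ) δ) with hμ
  have hmeas : AEStronglyMeasurable (fun q : ℝ × ℝ => q.2 ^ (-α) * (q.1 + q.2) ^ (-β))
      (μ.prod μ) := (meas2 α β).aestronglyMeasurable
  have hrw : IntegrableOn (fun q : ℝ × ℝ => q.2 ^ (-α) * (q.1 + q.2) ^ (-β))
      (Ioo 0 δ ×ˢ Ioo 0 δ) ↔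
      Integrable (fun q : ℝ × ℝ => q.2 ^ (-α) * (q.1 + q.2) ^ (-β)) (μ.prod μ) := by
    rw [IntegrableOn, hμ, Measure.prod_restrict, ← Measure.volume_eq_prod]
  have hfst : ∀ᵐ a ∂μ, Integrable (fun t => a ^ (-α) * (t + a) ^ (-β)) μ := by
    rw [hμ, ae_restrict_iff' measurableSet_Ioo]
    refine ae_of_all _ fun a ha => ?_
    exact (inner_int β ha.1).const_mul _
  have hGsm : AEStronglyMeasurable
      (fun a => ∫ t, ‖a ^ (-α) * (t + a) ^ (-β)‖ ∂μ) μ :=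
    ((meas2 α β).norm.integral_prod_left').aestronglyMeasurable
  have hG : ∀ a ∈ Ioo (0:ℝ) δ, (∫ t, ‖a ^ (-α) * (t + a) ^ (-β)‖ ∂μ)
      = a ^ (-α) * ∫ t in Ioo (0:ℝ) δ, (t + a) ^ (-β) := by
    intro a ha
    rw [← integral_const_mul, hμ]
    refine setIntegral_congr_ae measurableSet_Ioo ?_
    refine ae_of_all _ fun t ht => ?_
    have h1 : (0:ℝ) < a ^ (-α) := rpow_pos_of_pos ha.1 _
    have h2 : (0:ℝ) < (t + a) ^ (-β) := rpow_pos_of_pos (by linarith [ht.1, ha.1]) _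
    rw [Real.norm_eq_abs, abs_of_pos (by positivity)]
  have hGnonneg : ∀ a, 0 ≤ ∫ t, ‖a ^ (-α) * (t + a) ^ (-β)‖ ∂μ :=
    fun a => integral_nonneg fun t => norm_nonneg _
  rw [hrw, integrable_prod_iff' hmeas]
  constructor
  · rintro ⟨-, hInt⟩
    constructor
    · by_contra hα
      push_neg at hα
      set c : ℝ := δ * (2 * δ) ^ (-β) with hc
      have hcpos : 0 < c := by positivity
      have h1 : Integrable (fun a => c * a ^ (-α)) μ := by
        refine hInt.mono' (by apply Measurable.aestronglyMeasurable; fun_prop) ?_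
        rw [hμ, ae_restrict_iff' measurableSet_Ioo]
        refine ae_of_all _ fun a ha => ?_
        have h2 : (0:ℝ) < a ^ (-α) := rpow_pos_of_pos ha.1 _
        rw [Real.norm_eq_abs, abs_of_pos (by positivity)]
        rw [hG a ha]
        calc c * a ^ (-α) ≤ (∫ t in Ioo (0:ℝ) δ, (t + a) ^ (-β)) * a ^ (-α) := by
              exact mul_le_mul_of_nonneg_right (lb1 hβ ha) h2.le
          _ = a ^ (-α) * ∫ t in Ioo (0:ℝ) δ, (t + a) ^ (-β) := mul_comm _ _
      have h2 : Integrable (fun a => a ^ (-α)) μ := by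
        have h3 := h1.const_mul c⁻¹
        refine h3.congr (ae_of_all _ fun a => ?_)
        field_simp
      rw [hμ] at h2
      have := (intervalIntegral.integrableOn_Ioo_rpow_iff hδ0).1 h2
      linarith
    · by_contra hαβ
      push_neg at hαβ
      have h1 : Integrable (fun a => 2 ^ (-β) * a ^ (-α + (1 - β))) μ := by
        refine hInt.mono' (by apply Measurable.aestronglyMeasurable; fun_prop) ?_
        rw [hμ, ae_restrict_iff' measurableSet_Ioo]
        refine ae_of_all _ fun a ha => ?_
        have h2 : (0:ℝ) < a ^ (-α + (1 - β)) := rpow_pos_of_pos ha.1 _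
        rw [Real.norm_eq_abs, abs_of_pos (by positivity)]
        rw [hG a ha]
        have h4 : (0:ℝ) < a ^ (-α) := rpow_pos_of_pos ha.1 _
        calc 2 ^ (-β) * a ^ (-α + (1 - β))
            = (2 ^ (-β) * a ^ (1 - β)) * a ^ (-α) := by
              rw [rpow_add ha.1]; ring
          _ ≤ (∫ t in Ioo (0:ℝ) δ, (t + a) ^ (-β)) * a ^ (-α) :=
              mul_le_mul_of_nonneg_right (lb2 hβ ha) h4.le
          _ = a ^ (-α) * ∫ t in Ioo (0:ℝ) δ, (t + a) ^ (-β) := mul_comm _ _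
      have h2 : Integrable (fun a => a ^ (-α + (1 - β))) μ := by
        have h3 := h1.const_mul ((2:ℝ) ^ (-β))⁻¹
        refine h3.congr (ae_of_all _ fun a => ?_)
        have : ((2:ℝ) ^ (-β)) ≠ 0 := by positivity
        field_simp
      rw [hμ] at h2
      have := (intervalIntegral.integrableOn_Ioo_rpow_iff hδ0).1 h2
      linarith
  · rintro ⟨hα, hαβ⟩
    refine ⟨hfst, ?_⟩
    set b : ℝ := (max β 1 + (2 - α)) / 2 with hb
    have hmaxlt : max β 1 < 2 - α := max_lt (by linarith) (by linarith)
    have hb1 : 1 < b := by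
      have : (1:ℝ) ≤ max β 1 := le_max_right _ _
      rw [hb]; linarith
    have hbβ : β ≤ b := by
      have : β ≤ max β 1 := le_max_left _ _
      rw [hb]; linarith
    have hαb : α + b < 2 := by rw [hb]; linarith
    set C : ℝ := 2 ^ (b - β) / (b - 1) with hC
    have hCpos : 0 < C := by
      rw [hC]
      exact div_pos (by positivity) (by linarith)
    refine Integrable.mono' (g := fun a => C * a ^ (-α + (1 - b))) ?_ hGsm ?_
    · rw [hμ]
      exact ((intervalIntegral.integrableOn_Ioo_rpow_iff hδ0).2 (by linarith)).const_mul C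
    · rw [hμ, ae_restrict_iff' measurableSet_Ioo]
      refine ae_of_all _ fun a ha => ?_
      rw [Real.norm_eq_abs, abs_of_nonneg (hGnonneg a), hG a ha]
      have h4 : (0:ℝ) < a ^ (-α) := rpow_pos_of_pos ha.1 _
      calc a ^ (-α) * ∫ t in Ioo (0:ℝ) δ, (t + a) ^ (-β)
          ≤ a ^ (-α) * (2 ^ (b - β) * (a ^ (1 - b) / (b - 1))) :=
            mul_le_mul_of_nonneg_left (ub2 hβ hbβ hb1 ha hδ1) h4.le
        _ = C * a ^ (-α + (1 - b)) := by
            rw [rpow_add ha.1, hC]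
            field_simp

theorem stmt_15 (γ p δ : ℝ) (hγ : 0 < γ) (hp : 1 ≤ p) (hδ : δ ∈ Ioo (0:ℝ) 1) :
    IntegrableOn
        (fun q : ℝ × ℝ => 1 / (q.2 ^ ((γ - 1) * (p - 1)) * (q.1 + q.2) ^ (p - 1)))
        (Ioo 0 δ ×ˢ Ioo 0 δ)
      ↔ (p < (γ + 2) / γ ∧ (1 < γ → p < γ / (γ - 1))) := by
  obtain ⟨hδ0, hδ1⟩ := hδ
  have hβ : (0:ℝ) ≤ p - 1 := by linarith
  have hcongr : IntegrableOn
      (fun q : ℝ × ℝ => 1 / (q.2 ^ ((γ - 1) * (p - 1)) * (q.1 + q.2) ^ (p - 1)))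
      (Ioo 0 δ ×ˢ Ioo 0 δ)
      ↔ IntegrableOn
        (fun q : ℝ × ℝ => q.2 ^ (-((γ - 1) * (p - 1))) * (q.1 + q.2) ^ (-(p - 1)))
        (Ioo 0 δ ×ˢ Ioo 0 δ) := by
    refine integrableOn_congr_fun (fun q hq => ?_) (measurableSet_Ioo.prod measurableSet_Ioo)
    obtain ⟨hq1, hq2⟩ := hq
    have h1 : (0:ℝ) < q.2 := hq2.1
    have h2 : (0:ℝ) < q.1 + q.2 := by have := hq1.1; linarith
    rw [one_div, mul_inv, ← rpow_neg h1.le, ← rpow_neg h2.le]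
  rw [hcongr, core hβ hδ0 hδ1]
  constructor
  · rintro ⟨h1, h2⟩
    constructor
    · rw [lt_div_iff₀ hγ]
      nlinarith
    · intro hγ1
      rw [lt_div_iff₀ (by linarith)]
      nlinarith
  · rintro ⟨h1, h2⟩
    rw [lt_div_iff₀ hγ] at h1
    constructor
    · rcases le_or_gt γ 1 with h | h
      · nlinarith [mul_nonpos_of_nonpos_of_nonneg (by linarith : γ - 1 ≤ 0) hβ]
      · have h3 := h2 h
        rw [lt_div_iff₀ (by linarith)] at h3
        nlinarith
    · nlinarith
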